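/- Let G be a finite simple (C4, diamond)-free graph with no clique cutset, let v1, v2 ∈ V(G), and let S1 = (A1, C1, B1) and S2 = (A2, C2, B2) be separations of G such that for i = 1, 2: v_i ∈ C_i ⊆ N[v_i], B_i is connected, and N(B_i) = C_i \ {v_i}. If v2 ∈ A1 and B2 ∩ (B1 ∪ (C1 \ {v1})) ≠ ∅, then B1 ∪ C1 ⊆ B2 ∪ C2 (that is, S1 is a shield for S2). -/
import Mathlib


open SimpleGraph

namespace Paper

variable {V : Type*}

/-- `G` contains an induced subgraph isomorphic to `H`. -/
def ContainsInduced {W : Type*} (G : SimpleGraph V) (H : SimpleGraph W) : Prop :=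
  ∃ S : Set V, Nonempty (G.induce S ≃g H)

/-- `G` is `H`-free: no induced subgraph of `G` is isomorphic to `H`. -/
def Free {W : Type*} (G : SimpleGraph V) (H : SimpleGraph W) : Prop :=
  ¬ ContainsInduced G H

/-- The diamond: `K₄` minus an edge. -/
def diamond : SimpleGraph (Fin 4) :=
  (⊤ : SimpleGraph (Fin 4)).deleteEdges {s(0, 1)}

/-- `S` induces a hole (an induced cycle of length at least 4) in `G`. -/
def IsHoleSet (G : SimpleGraph V) (S : Set V) : Prop :=
  ∃ n : ℕ, 4 ≤ n ∧ Nonempty (G.induce S ≃g cycleGraph n)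

/-- `G` contains an even hole. -/
def HasEvenHole (G : SimpleGraph V) : Prop :=
  ∃ S : Set V, ∃ n : ℕ, 4 ≤ n ∧ Even n ∧ Nonempty (G.induce S ≃g cycleGraph n)

/-- The union of the vertex sets of two walks induces a hole in `G`. -/
def PairHole (G : SimpleGraph V) {a b c d : V} (P : G.Walk a b) (Q : G.Walk c d) : Prop :=
  IsHoleSet G {v | v ∈ P.support ∨ v ∈ Q.support}

/-- `G` contains a theta. -/
def HasTheta (G : SimpleGraph V) : Prop :=
  ∃ (a b : V) (P₁ P₂ P₃ : G.Walk a b),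
    a ≠ b ∧ ¬ G.Adj a b ∧
    P₁.IsPath ∧ P₂.IsPath ∧ P₃.IsPath ∧
    PairHole G P₁ P₂ ∧ PairHole G P₁ P₃ ∧ PairHole G P₂ P₃

/-- `G` contains a pyramid. -/
def HasPyramid (G : SimpleGraph V) : Prop :=
  ∃ (a b₁ b₂ b₃ : V) (P₁ : G.Walk a b₁) (P₂ : G.Walk a b₂) (P₃ : G.Walk a b₃),
    G.Adj b₁ b₂ ∧ G.Adj b₁ b₃ ∧ G.Adj b₂ b₃ ∧
    a ≠ b₁ ∧ a ≠ b₂ ∧ a ≠ b₃ ∧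
    P₁.IsPath ∧ P₂.IsPath ∧ P₃.IsPath ∧
    PairHole G P₁ P₂ ∧ PairHole G P₁ P₃ ∧ PairHole G P₂ P₃

/-- `G` contains a prism. -/
def HasPrism (G : SimpleGraph V) : Prop :=
  ∃ (a₁ a₂ a₃ b₁ b₂ b₃ : V) (P₁ : G.Walk a₁ b₁) (P₂ : G.Walk a₂ b₂) (P₃ : G.Walk a₃ b₃),
    G.Adj a₁ a₂ ∧ G.Adj a₁ a₃ ∧ G.Adj a₂ a₃ ∧
    G.Adj b₁ b₂ ∧ G.Adj b₁ b₃ ∧ G.Adj b₂ b₃ ∧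
    ({a₁, a₂, a₃} : Set V) ∩ {b₁, b₂, b₃} = ∅ ∧
    P₁.IsPath ∧ P₂.IsPath ∧ P₃.IsPath ∧
    PairHole G P₁ P₂ ∧ PairHole G P₁ P₃ ∧ PairHole G P₂ P₃

/-- The neighbors of `v` inside the set `S`. -/
def nbrsIn (G : SimpleGraph V) (S : Set V) (v : V) : Set V :=
  {u | u ∈ S ∧ G.Adj v u}

/-- `(S, v)` is a wheel of `G`: `S` is a hole and `v ∉ S` has at least 3 neighbors in `S`. -/
def IsWheel (G : SimpleGraph V) (S : Set V) (v : V) : Prop :=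
  IsHoleSet G S ∧ v ∉ S ∧ 3 ≤ (nbrsIn G S v).ncard

/-- `(S, v)` is an even wheel of `G`. -/
def IsEvenWheel (G : SimpleGraph V) (S : Set V) (v : V) : Prop :=
  IsWheel G S v ∧ Even (nbrsIn G S v).ncard

def HasWheel (G : SimpleGraph V) : Prop := ∃ (S : Set V) (v : V), IsWheel G S v

def HasEvenWheel (G : SimpleGraph V) : Prop := ∃ (S : Set V) (v : V), IsEvenWheel G S v

/-- A bug: a wheel whose hub has exactly three neighbors in the hole,
exactly two of which are adjacent. -/
def IsBug (G : SimpleGraph V) (S : Set V) (v : V) : Prop :=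
  IsWheel G S v ∧ ∃ x y z : V, x ≠ y ∧ x ≠ z ∧ y ≠ z ∧
    nbrsIn G S v = {x, y, z} ∧ G.Adj x y ∧ ¬ G.Adj x z ∧ ¬ G.Adj y z

/-- A twin wheel: the neighbors of the hub in the hole induce a path of length two. -/
def IsTwinWheel (G : SimpleGraph V) (S : Set V) (v : V) : Prop :=
  IsWheel G S v ∧ ∃ x y z : V, x ≠ y ∧ x ≠ z ∧ y ≠ z ∧
    nbrsIn G S v = {x, y, z} ∧ G.Adj x y ∧ G.Adj y z ∧ ¬ G.Adj x z

/-- A universal wheel: the hub is adjacent to every vertex of the hole. -/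
def IsUniversalWheel (G : SimpleGraph V) (S : Set V) (v : V) : Prop :=
  IsWheel G S v ∧ ∀ u ∈ S, G.Adj v u

/-- `G` is a member of the class 𝒞 of
(C4, diamond, theta, pyramid, prism, even wheel)-free graphs. -/
def InC (G : SimpleGraph V) : Prop :=
  Free G (cycleGraph 4) ∧ Free G diamond ∧ ¬ HasTheta G ∧ ¬ HasPyramid G ∧
    ¬ HasPrism G ∧ ¬ HasEvenWheel G

/-- The independence number of `G`. -/
noncomputable def indepNum (G : SimpleGraph V) : ℕ :=
  sSup {n | ∃ S : Set V, (S.Pairwise fun u v => ¬ G.Adj u v) ∧ S.ncard = n}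

/-- The clique number of `G`. -/
noncomputable def cliqueNum (G : SimpleGraph V) : ℕ :=
  sSup {n | ∃ S : Set V, G.IsClique S ∧ S.ncard = n}

/-- The (vertex) clique cover number of `G`: the minimum number of parts in a
partition of the vertex set of `G` into cliques. -/
noncomputable def cliqueCoverNum (G : SimpleGraph V) : ℕ :=
  sInf {n | ∃ F : Finset (Set V), F.card = n ∧ (∀ C ∈ F, G.IsClique C) ∧
    ∀ v : V, ∃! C : Set V, C ∈ F ∧ v ∈ C}

/-- A tree decomposition of `G`. -/
structure TreeDecomp (G : SimpleGraph V) where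
  ι : Type
  tree : SimpleGraph ι
  tree_acyclic : tree.IsAcyclic
  tree_connected : tree.Connected
  bag : ι → Set V
  bag_cover : ∀ v : V, ∃ t, v ∈ bag t
  bag_edge : ∀ ⦃u v : V⦄, G.Adj u v → ∃ t, u ∈ bag t ∧ v ∈ bag t
  bag_subtree : ∀ v : V, (tree.induce {t | v ∈ bag t}).Connected

/-- The treewidth of `G`: the minimum over tree decompositions of (max bag size − 1). -/
noncomputable def treewidth (G : SimpleGraph V) : ℕ :=
  sInf {k | ∃ D : TreeDecomp G, ∀ t, (D.bag t).ncard ≤ k + 1}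

/-- The tree independence number of `G`. -/
noncomputable def treeIndepNum (G : SimpleGraph V) : ℕ :=
  sInf {k | ∃ D : TreeDecomp G, ∀ t, indepNum (G.induce (D.bag t)) ≤ k}

/-- The tree clique cover number of `G`. -/
noncomputable def treeCliqueCoverNum (G : SimpleGraph V) : ℕ :=
  sInf {k | ∃ D : TreeDecomp G, ∀ t, cliqueCoverNum (G.induce (D.bag t)) ≤ k}

/-- A weight function on a finite graph: values in `[0,1]` summing to `1`. -/
def IsWeightFn [Fintype V] (w : V → ℝ) : Prop :=
  (∀ v, 0 ≤ w v ∧ w v ≤ 1) ∧ ∑ v, w v = 1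

/-- The weight of a set of vertices. -/
noncomputable def wSet (w : V → ℝ) (S : Set V) : ℝ := ∑ᶠ x ∈ S, w x

/-- `X` is a `(w, c)`-balanced separator of `G`: every connected component of
`G − X` has weight at most `c`. -/
def IsBalancedSep (G : SimpleGraph V) (w : V → ℝ) (c : ℝ) (X : Set V) : Prop :=
  ∀ D : (G.induce Xᶜ).ConnectedComponent, wSet w (Subtype.val '' D.supp) ≤ c

/-- `G` has a clique cutset: a clique `C` such that `G − C` is disconnected. -/
def HasCliqueCutset (G : SimpleGraph V) : Prop :=
  ∃ C : Set V, G.IsClique C ∧ ¬ (G.induce Cᶜ).Preconnected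

/-- The closed neighborhood of `v`. -/
def closedNbhd (G : SimpleGraph V) (v : V) : Set V := insert v (G.neighborSet v)

/-- The (open) neighborhood of a set `S`: vertices outside `S` with a neighbor in `S`. -/
def setNbhd (G : SimpleGraph V) (S : Set V) : Set V :=
  {v | v ∉ S ∧ ∃ u ∈ S, G.Adj v u}

/-- `(A, C, B)` is a separation of `G`. -/
def IsSeparation (G : SimpleGraph V) (A C B : Set V) : Prop :=
  A ∪ C ∪ B = Set.univ ∧ Disjoint A C ∧ Disjoint A B ∧ Disjoint C B ∧
    ∀ a ∈ A, ∀ b ∈ B, ¬ G.Adj a b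

/-- `v` is a balanced vertex with respect to `w`: every connected component of
`G − N[v]` has weight at most `1/2`. -/
def IsBalancedVtx (G : SimpleGraph V) (w : V → ℝ) (v : V) : Prop :=
  ∀ D : (G.induce (closedNbhd G v)ᶜ).ConnectedComponent,
    wSet w (Subtype.val '' D.supp) ≤ 1 / 2



private lemma walk_prop {V : Type} {G : SimpleGraph V} (P : V → Prop) {S : Set V}
    {a b : S} (w : (G.induce S).Walk a b) (ha : P a)
    (hstep : ∀ u v : S, G.Adj u v → P u → P v) : P b := by
  induction w with
  | nil => exact ha
  | cons h _ ih => exact ih (hstep _ _ h ha)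

private lemma contains_of_four {V : Type} (G : SimpleGraph V) (H : SimpleGraph (Fin 4))
    (f : Fin 4 → V) (hinj : Function.Injective f)
    (hadj : ∀ i j : Fin 4, H.Adj i j ↔ G.Adj (f i) (f j)) :
    ContainsInduced G H := by
  refine ⟨Set.range f, ⟨?_⟩⟩
  refine ⟨(Equiv.ofInjective f hinj).symm, ?_⟩
  intro u v
  have hu : f ((Equiv.ofInjective f hinj).symm u) = u.val := Equiv.apply_ofInjective_symm hinj u
  have hv : f ((Equiv.ofInjective f hinj).symm v) = v.val := Equiv.apply_ofInjective_symm hinj v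
  show H.Adj _ _ ↔ G.Adj u.val v.val
  rw [hadj, hu, hv]

private lemma inj4 {V : Type} {a b c d : V} (hab : a ≠ b) (hac : a ≠ c) (had : a ≠ d)
    (hbc : b ≠ c) (hbd : b ≠ d) (hcd : c ≠ d) : Function.Injective ![a, b, c, d] := by
  intro i j h
  fin_cases i <;> fin_cases j <;>
    simp_all [hab.symm, hac.symm, had.symm, hbc.symm, hbd.symm, hcd.symm]

theorem statement12 {V : Type} [Fintype V] (G : SimpleGraph V)
    (hc4 : Free G (cycleGraph 4)) (hd : Free G diamond) (hnc : ¬ HasCliqueCutset G)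
    (v₁ v₂ : V) (A₁ C₁ B₁ A₂ C₂ B₂ : Set V)
    (hS₁ : IsSeparation G A₁ C₁ B₁) (hS₂ : IsSeparation G A₂ C₂ B₂)
    (hv₁ : v₁ ∈ C₁) (hC₁ : C₁ ⊆ closedNbhd G v₁)
    (hB₁ : (G.induce B₁).Connected) (hN₁ : setNbhd G B₁ = C₁ \ {v₁})
    (hv₂ : v₂ ∈ C₂) (hC₂ : C₂ ⊆ closedNbhd G v₂)
    (hB₂ : (G.induce B₂).Connected) (hN₂ : setNbhd G B₂ = C₂ \ {v₂})
    (hv₂A₁ : v₂ ∈ A₁) (hmeet : (B₂ ∩ (B₁ ∪ (C₁ \ {v₁}))).Nonempty) :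
    B₁ ∪ C₁ ⊆ B₂ ∪ C₂ := by
  obtain ⟨hU₁, hAC₁, hAB₁, hCB₁, hE₁⟩ := hS₁
  obtain ⟨hU₂, hAC₂, hAB₂, hCB₂, hE₂⟩ := hS₂
  -- v₂ is not in B₁ or C₁
  have hv₂nB₁ : v₂ ∉ B₁ := fun h => (hAB₁.ne_of_mem hv₂A₁ h) rfl
  have hv₂nC₁ : v₂ ∉ C₁ := fun h => (hAC₁.ne_of_mem hv₂A₁ h) rfl
  -- B₁ ∩ C₂ = ∅
  have hB₁C₂ : ∀ b ∈ B₁, b ∉ C₂ := by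
    intro b hb hbc
    rcases hC₂ hbc with h | h
    · exact hv₂nB₁ (h ▸ hb)
    · exact hE₁ v₂ hv₂A₁ b hb h
  -- B₁ ⊆ A₂ ∪ B₂
  have hB₁sub : ∀ b ∈ B₁, b ∈ A₂ ∨ b ∈ B₂ := by
    intro b hb
    have : b ∈ A₂ ∪ C₂ ∪ B₂ := hU₂ ▸ Set.mem_univ b
    rcases this with (h | h) | h
    · exact Or.inl h
    · exact absurd h (hB₁C₂ b hb)
    · exact Or.inr h
  -- seed: some b₀ ∈ B₁ ∩ B₂
  obtain ⟨x, hxB₂, hx⟩ := hmeet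
  have hseed : ∃ b₀, b₀ ∈ B₁ ∧ b₀ ∈ B₂ := by
    rcases hx with hxB₁ | hxC
    · exact ⟨x, hxB₁, hxB₂⟩
    · rw [← hN₁] at hxC
      obtain ⟨-, u, huB₁, hadj⟩ := hxC
      rcases hB₁sub u huB₁ with h | h
      · exact absurd hadj.symm (hE₂ u h x hxB₂)
      · exact ⟨u, huB₁, h⟩
  obtain ⟨b₀, hb₀B₁, hb₀B₂⟩ := hseed
  -- B₁ ⊆ B₂
  have hB₁B₂ : ∀ b ∈ B₁, b ∈ B₂ := by
    intro b hb
    obtain ⟨w⟩ := hB₁.preconnected ⟨b₀, hb₀B₁⟩ ⟨b, hb⟩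
    exact walk_prop (fun z => z ∈ B₂) w hb₀B₂ (by
      rintro ⟨u, huB₁⟩ ⟨u', hu'B₁⟩ hadj huB₂
      rcases hB₁sub u' hu'B₁ with h | h
      · exact absurd hadj.symm (hE₂ u' h u huB₂)
      · exact h)
  -- C₁ \ {v₁} ⊆ B₂ ∪ C₂
  have hCmv : ∀ c ∈ C₁, c ≠ v₁ → c ∈ B₂ ∪ C₂ := by
    intro c hc hne
    have hcN : c ∈ setNbhd G B₁ := hN₁ ▸ ⟨hc, hne⟩
    obtain ⟨-, u, huB₁, hadj⟩ := hcN
    have : c ∈ A₂ ∪ C₂ ∪ B₂ := hU₂ ▸ Set.mem_univ c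
    rcases this with (h | h) | h
    · exact absurd hadj (hE₂ c h u (hB₁B₂ u huB₁))
    · exact Or.inr h
    · exact Or.inl h
  -- v₁ ∈ B₂ ∪ C₂
  have hv₁ne₂ : v₁ ≠ v₂ := fun h => hv₂nC₁ (h ▸ hv₁)
  have hv₁mem : v₁ ∈ B₂ ∪ C₂ := by
    by_contra hv₁n
    have hv₁A₂ : v₁ ∈ A₂ := by
      have : v₁ ∈ A₂ ∪ C₂ ∪ B₂ := hU₂ ▸ Set.mem_univ v₁
      rcases this with (h | h) | h
      · exact h
      · exact absurd (Or.inr h) hv₁n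
      · exact absurd (Or.inl h) hv₁n
    -- every c ∈ C₁ \ {v₁} is in C₂
    have hCC₂ : ∀ c ∈ C₁, c ≠ v₁ → c ∈ C₂ := by
      intro c hc hne
      have hadj : G.Adj v₁ c := by
        rcases hC₁ hc with h | h
        · exact absurd h hne
        · exact h
      rcases hCmv c hc hne with h | h
      · exact absurd hadj (hE₂ v₁ hv₁A₂ c h)
      · exact h
    -- C₁ \ {v₁} is a clique
    have hclique : G.IsClique (C₁ \ {v₁}) := by
      rintro x ⟨hxC₁, hxv₁⟩ y ⟨hyC₁, hyv₁⟩ hxy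
      by_contra hnadj
      have hxv₁' : x ≠ v₁ := hxv₁
      have hyv₁' : y ≠ v₁ := hyv₁
      have hxv₂ : x ≠ v₂ := fun h => (hAC₁.ne_of_mem hv₂A₁ hxC₁) h.symm
      have hyv₂ : y ≠ v₂ := fun h => (hAC₁.ne_of_mem hv₂A₁ hyC₁) h.symm
      have hv₁x : G.Adj v₁ x := by
        rcases hC₁ hxC₁ with h | h
        · exact absurd h hxv₁'
        · exact h
      have hv₁y : G.Adj v₁ y := by
        rcases hC₁ hyC₁ with h | h
        · exact absurd h hyv₁'
        · exact h
      have hv₂x : G.Adj v₂ x := by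
        rcases hC₂ (hCC₂ x hxC₁ hxv₁') with h | h
        · exact absurd h hxv₂
        · exact h
      have hv₂y : G.Adj v₂ y := by
        rcases hC₂ (hCC₂ y hyC₁ hyv₁') with h | h
        · exact absurd h hyv₂
        · exact h
      have hnadj' : ¬ G.Adj y x := fun h => hnadj h.symm
      have hxv₁s : G.Adj x v₁ := hv₁x.symm
      have hyv₁s : G.Adj y v₁ := hv₁y.symm
      have hxv₂s : G.Adj x v₂ := hv₂x.symm
      have hyv₂s : G.Adj y v₂ := hv₂y.symm
      by_cases h12 : G.Adj v₁ v₂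
      · -- diamond on x, y, v₁, v₂
        apply hd
        apply contains_of_four G diamond ![x, y, v₁, v₂]
          (inj4 hxy hxv₁' hxv₂ hyv₁' hyv₂ hv₁ne₂)
        intro i j
        fin_cases i <;> fin_cases j <;>
          simp [diamond, SimpleGraph.deleteEdges_adj, Set.mem_singleton_iff,
            hnadj, hnadj', hxv₁s, hyv₁s, hxv₂s, hyv₂s, hv₁x, hv₁y, hv₂x, hv₂y,
            h12, h12.symm, Sym2.eq, Sym2.rel_iff'] <;> decide
      · -- C4 on v₁, x, v₂, y
        have h12' : ¬ G.Adj v₂ v₁ := fun h => h12 h.symm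
        apply hc4
        apply contains_of_four G (cycleGraph 4) ![v₁, x, v₂, y]
          (inj4 (Ne.symm hxv₁') hv₁ne₂ (Ne.symm hyv₁') hxv₂ hxy (Ne.symm hyv₂))
        intro i j
        fin_cases i <;> fin_cases j <;>
          simp [cycleGraph_adj, hnadj, hnadj', hxv₁s, hyv₁s, hxv₂s, hyv₂s,
            hv₁x, hv₁y, hv₂x, hv₂y, h12, h12'] <;> decide
    -- C₁ \ {v₁} is a clique cutset
    apply hnc
    refine ⟨C₁ \ {v₁}, hclique, ?_⟩
    intro hpre
    obtain ⟨⟨b, hbB₁⟩⟩ := hB₁.nonempty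
    have hbC : b ∈ (C₁ \ {v₁} : Set V)ᶜ := by
      rintro ⟨h, -⟩; exact (hCB₁.ne_of_mem h hbB₁) rfl
    have hv₂C : v₂ ∈ (C₁ \ {v₁} : Set V)ᶜ := by rintro ⟨h, -⟩; exact hv₂nC₁ h
    obtain ⟨w⟩ := hpre ⟨b, hbC⟩ ⟨v₂, hv₂C⟩
    have : v₂ ∈ B₁ := by
      refine walk_prop (fun z => z ∈ B₁) w hbB₁ ?_
      intro u u' hadj huB₁
      by_contra hu'n
      have hmem : ↑u' ∈ setNbhd G B₁ := ⟨hu'n, u.1, huB₁, hadj.symm⟩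
      rw [hN₁] at hmem
      exact u'.2 hmem
    exact hv₂nB₁ this
  -- conclude
  rintro z (hz | hz)
  · exact Or.inl (hB₁B₂ z hz)
  · by_cases hzv : z = v₁
    · exact hzv ▸ hv₁mem
    · exact hCmv z hz hzv


end Paper
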